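/- Let R be a commutative ring and let 𝔞 ⊆ R be an ideal. Then Γ_𝔞 = Γ_{√𝔞} (i.e., Γ_𝔞(M) = Γ_{√𝔞}(M) for every R-module M) holds if and only if there exists n ∈ ℕ with (√𝔞)^n ⊆ 𝔞. (Corollary 1.30 a).) -/
import Mathlib


/-- (Corollary 1.30 a)): for an ideal `𝔞` of a commutative ring `R`,
the torsion functors `Γ_𝔞` and `Γ_√𝔞` coincide if and only if some power of `√𝔞`
is contained in `𝔞`. -/
theorem torsion_eq_torsion_radical_iff {R : Type u} [CommRing R] (𝔞 : Ideal R) :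
    (∀ (M : Type u) [AddCommGroup M] [Module R M] (x : M),
        (∃ n : ℕ, 𝔞 ^ n ≤ Ideal.torsionOf R M x) ↔
          (∃ n : ℕ, 𝔞.radical ^ n ≤ Ideal.torsionOf R M x)) ↔
      ∃ n : ℕ, 𝔞.radical ^ n ≤ 𝔞 := by
  constructor
  · intro h
    have key := (h (R ⧸ 𝔞) (Ideal.Quotient.mk 𝔞 1)).mp
    have htor : Ideal.torsionOf R (R ⧸ 𝔞) (Ideal.Quotient.mk 𝔞 1) = 𝔞 := by
      ext r
      simp only [Ideal.mem_torsionOf_iff]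
      rw [show r • (Ideal.Quotient.mk 𝔞) 1 = Ideal.Quotient.mk 𝔞 r from by rw [← Ideal.Quotient.mk_eq_mk, ← Submodule.Quotient.mk_smul, smul_eq_mul, mul_one, Ideal.Quotient.mk_eq_mk]]
      exact Ideal.Quotient.eq_zero_iff_mem
    rw [htor] at key
    exact key ⟨1, by simp⟩
  · rintro ⟨n, hn⟩ M _ _ x
    constructor
    · rintro ⟨m, hm⟩
      exact ⟨n * m, by rw [pow_mul]; exact le_trans (Ideal.pow_right_mono hn m) hm⟩
    · rintro ⟨m, hm⟩
      exact ⟨m, le_trans (Ideal.pow_right_mono Ideal.le_radical m) hm⟩
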